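/- (Error dynamics for the ego-centric SLAM example.) Let R(θ) = [[cos θ, −sin θ], [sin θ, cos θ]] and S = [[0, −1], [1, 0]]. Fix an origin x° ∈ ℝ² with x° ≠ 0. Let v : ℝ → ℝ² be continuous, and let x : ℝ → ℝ², θ̂ : ℝ → ℝ, â : ℝ → ℝ be differentiable with â(t) > 0 and x(t) ≠ 0 for all t, satisfying the true kinematics x'(t) = v(t) and the lifted observer kinematics θ̂'(t) = x̂(t)ᵀ(S⬝v(t)) / (x̂(t)ᵀx̂(t)) and â'(t) = −â(t) · x̂(t)ᵀv(t) / (x̂(t)ᵀx̂(t)), where x̂(t) := â(t)⁻¹ • (R(θ̂(t))ᵀ ⬝ x°). Define the global error e(t) := â(t) • (R(θ̂(t)) ⬝ x(t)) and the origin velocity v°(t) := â(t) • (R(θ̂(t)) ⬝ v(t)). Then for every t, e is differentiable at t with e'(t) = ( e(t)ᵀ(S⬝v°(t))/(e(t)ᵀe(t)) − x°ᵀ(S⬝v°(t))/(x°ᵀx°) ) • (Sᵀ ⬝ e(t)) + ( e(t)ᵀv°(t)/(e(t)ᵀe(t)) − x°ᵀv°(t)/(x°ᵀx°) ) • e(t);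 that is, the error dynamics depend only on e and v°, taking the form ė = Dφ_e(id)[Λ(e, v°) − Λ(x°, v°)] with Λ(x, v) = (xᵀ(S⬝v)/(xᵀx), −xᵀv/(xᵀx)). -/

import Mathlib

open Matrix

/-- The 2×2 rotation matrix `R(θ)`. -/
noncomputable def Rot (θ : ℝ) : Matrix (Fin 2) (Fin 2) ℝ :=
  !![Real.cos θ, -Real.sin θ; Real.sin θ, Real.cos θ]

/-- The matrix `S = [[0,−1],[1,0]]`. -/
def Smat : Matrix (Fin 2) (Fin 2) ℝ := !![0, -1; 1, 0]

/-- error dynamics for the ego-centric SLAM example: with origin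
`x° ≠ 0`, true kinematics `x' = v`, lifted observer kinematics for `(θ̂, â)` driven by
the estimate `x̂ = â⁻¹ • (R(θ̂)ᵀ⬝x°)`, global error `e = â • (R(θ̂)⬝x)` and origin
velocity `v° = â • (R(θ̂)⬝v)`, the error satisfies
`ė = (eᵀ(S⬝v°)/(eᵀe) − x°ᵀ(S⬝v°)/(x°ᵀx°)) • (Sᵀ⬝e) + (eᵀv°/(eᵀe) − x°ᵀv°/(x°ᵀx°)) • e`,
i.e. `ė = Dφ_e(id)[Λ(e, v°) − Λ(x°, v°)]`, depending only on `e` and `v°`. -/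
theorem slam2d_error_dynamics
    (xo : Fin 2 → ℝ) (hxo : xo ≠ 0)
    (v : ℝ → (Fin 2 → ℝ)) (hv : Continuous v)
    (x : ℝ → (Fin 2 → ℝ)) (θhat ahat : ℝ → ℝ)
    (ha : ∀ t, 0 < ahat t) (hx : ∀ t, x t ≠ 0)
    (hxdot : ∀ t, HasDerivAt x (v t) t)
    (hθdot : ∀ t, HasDerivAt θhat
      ((((ahat t)⁻¹ • ((Rot (θhat t))ᵀ *ᵥ xo)) ⬝ᵥ (Smat *ᵥ v t))
        / (((ahat t)⁻¹ • ((Rot (θhat t))ᵀ *ᵥ xo)) ⬝ᵥ ((ahat t)⁻¹ • ((Rot (θhat t))ᵀ *ᵥ xo)))) t)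
    (hadot : ∀ t, HasDerivAt ahat
      (-(ahat t) * ((((ahat t)⁻¹ • ((Rot (θhat t))ᵀ *ᵥ xo)) ⬝ᵥ v t)
        / (((ahat t)⁻¹ • ((Rot (θhat t))ᵀ *ᵥ xo)) ⬝ᵥ ((ahat t)⁻¹ • ((Rot (θhat t))ᵀ *ᵥ xo))))) t)
    (e vo : ℝ → (Fin 2 → ℝ))
    (he : ∀ t, e t = ahat t • (Rot (θhat t) *ᵥ x t))
    (hvo : ∀ t, vo t = ahat t • (Rot (θhat t) *ᵥ v t)) :
    ∀ t, HasDerivAt e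
      ((e t ⬝ᵥ (Smat *ᵥ vo t) / (e t ⬝ᵥ e t) - xo ⬝ᵥ (Smat *ᵥ vo t) / (xo ⬝ᵥ xo))
          • (Smatᵀ *ᵥ e t)
        + (e t ⬝ᵥ vo t / (e t ⬝ᵥ e t) - xo ⬝ᵥ vo t / (xo ⬝ᵥ xo)) • e t) t := by
  intro t
  have ha0 : ahat t ≠ 0 := (ha t).ne'
  have ha0' : (ahat t)⁻¹ * (ahat t)⁻¹ ≠ 0 := mul_ne_zero (inv_ne_zero ha0) (inv_ne_zero ha0)
  have hcs : Real.cos (θhat t) ^ 2 + Real.sin (θhat t) ^ 2 = 1 :=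
    Real.cos_sq_add_sin_sq (θhat t)
  -- nonzeroness of the dot products
  have hoo : xo 0 * xo 0 + xo 1 * xo 1 ≠ 0 := by
    have h01 : xo 0 ≠ 0 ∨ xo 1 ≠ 0 := by
      by_contra h
      push_neg at h
      exact hxo (by funext i; fin_cases i <;> simp [h.1, h.2])
    rcases h01 with h | h
    · nlinarith [mul_self_pos.mpr h, mul_self_nonneg (xo 1)]
    · nlinarith [mul_self_pos.mpr h, mul_self_nonneg (xo 0)]
  have hxx : x t 0 * x t 0 + x t 1 * x t 1 ≠ 0 := by
    have h01 : x t 0 ≠ 0 ∨ x t 1 ≠ 0 := by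
      by_contra h
      push_neg at h
      exact hx t (by funext i; fin_cases i <;> simp [h.1, h.2])
    rcases h01 with h | h
    · nlinarith [mul_self_pos.mpr h, mul_self_nonneg (x t 1)]
    · nlinarith [mul_self_pos.mpr h, mul_self_nonneg (x t 0)]
  -- component formulas
  have hE0 : e t 0 = ahat t * (Real.cos (θhat t) * x t 0 - Real.sin (θhat t) * x t 1) := by
    rw [he t]
    simp only [Pi.smul_apply, smul_eq_mul, Matrix.mulVec, dotProduct, Fin.sum_univ_two,
      Rot, Matrix.cons_val', Matrix.cons_val_zero, Matrix.cons_val_one, Matrix.head_cons,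
      Matrix.head_fin_const, Matrix.empty_val', Matrix.cons_val_fin_one, Matrix.of_apply,
      Fin.isValue]
    ring
  have hE1 : e t 1 = ahat t * (Real.sin (θhat t) * x t 0 + Real.cos (θhat t) * x t 1) := by
    rw [he t]
    simp only [Pi.smul_apply, smul_eq_mul, Matrix.mulVec, dotProduct, Fin.sum_univ_two,
      Rot, Matrix.cons_val', Matrix.cons_val_zero, Matrix.cons_val_one, Matrix.head_cons,
      Matrix.head_fin_const, Matrix.empty_val', Matrix.cons_val_fin_one, Matrix.of_apply,
      Fin.isValue]
  have hV0 : vo t 0 = ahat t * (Real.cos (θhat t) * v t 0 - Real.sin (θhat t) * v t 1) := by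
    rw [hvo t]
    simp only [Pi.smul_apply, smul_eq_mul, Matrix.mulVec, dotProduct, Fin.sum_univ_two,
      Rot, Matrix.cons_val', Matrix.cons_val_zero, Matrix.cons_val_one, Matrix.head_cons,
      Matrix.head_fin_const, Matrix.empty_val', Matrix.cons_val_fin_one, Matrix.of_apply,
      Fin.isValue]
    ring
  have hV1 : vo t 1 = ahat t * (Real.sin (θhat t) * v t 0 + Real.cos (θhat t) * v t 1) := by
    rw [hvo t]
    simp only [Pi.smul_apply, smul_eq_mul, Matrix.mulVec, dotProduct, Fin.sum_univ_two,
      Rot, Matrix.cons_val', Matrix.cons_val_zero, Matrix.cons_val_one, Matrix.head_cons,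
      Matrix.head_fin_const, Matrix.empty_val', Matrix.cons_val_fin_one, Matrix.of_apply,
      Fin.isValue]
  have hS0 : (Smat *ᵥ e t) 0 = -(e t 1) := by
    simp only [Smat, Matrix.mulVec, dotProduct, Fin.sum_univ_two, Matrix.cons_val',
      Matrix.cons_val_zero, Matrix.cons_val_one, Matrix.head_cons, Matrix.head_fin_const,
      Matrix.empty_val', Matrix.cons_val_fin_one, Matrix.of_apply, Fin.isValue]
    ring
  have hS1 : (Smat *ᵥ e t) 1 = e t 0 := by
    simp only [Smat, Matrix.mulVec, dotProduct, Fin.sum_univ_two, Matrix.cons_val',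
      Matrix.cons_val_zero, Matrix.cons_val_one, Matrix.head_cons, Matrix.head_fin_const,
      Matrix.empty_val', Matrix.cons_val_fin_one, Matrix.of_apply, Fin.isValue]
    ring
  have hST0 : (Smatᵀ *ᵥ e t) 0 = e t 1 := by
    simp only [Smat, Matrix.mulVec, dotProduct, Fin.sum_univ_two, Matrix.transpose_apply,
      Matrix.cons_val', Matrix.cons_val_zero, Matrix.cons_val_one, Matrix.head_cons,
      Matrix.head_fin_const, Matrix.empty_val', Matrix.cons_val_fin_one, Matrix.of_apply,
      Fin.isValue]
    ring
  have hST1 : (Smatᵀ *ᵥ e t) 1 = -(e t 0) := by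
    simp only [Smat, Matrix.mulVec, dotProduct, Fin.sum_univ_two, Matrix.transpose_apply,
      Matrix.cons_val', Matrix.cons_val_zero, Matrix.cons_val_one, Matrix.head_cons,
      Matrix.head_fin_const, Matrix.empty_val', Matrix.cons_val_fin_one, Matrix.of_apply,
      Fin.isValue]
    ring
  -- dot-product expansions
  have hd1 : e t ⬝ᵥ (Smat *ᵥ vo t) = e t 0 * (-(vo t 1)) + e t 1 * vo t 0 := by
    simp only [Smat, Matrix.mulVec, dotProduct, Fin.sum_univ_two, Matrix.cons_val',
      Matrix.cons_val_zero, Matrix.cons_val_one, Matrix.head_cons, Matrix.head_fin_const,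
      Matrix.empty_val', Matrix.cons_val_fin_one, Matrix.of_apply, Fin.isValue]
    ring
  have hd2 : e t ⬝ᵥ vo t = e t 0 * vo t 0 + e t 1 * vo t 1 := by
    simp only [dotProduct, Fin.sum_univ_two]
  have hd3 : e t ⬝ᵥ e t = e t 0 * e t 0 + e t 1 * e t 1 := by
    simp only [dotProduct, Fin.sum_univ_two]
  have hdo1 : xo ⬝ᵥ (Smat *ᵥ vo t) = xo 0 * (-(vo t 1)) + xo 1 * vo t 0 := by
    simp only [Smat, Matrix.mulVec, dotProduct, Fin.sum_univ_two, Matrix.cons_val',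
      Matrix.cons_val_zero, Matrix.cons_val_one, Matrix.head_cons, Matrix.head_fin_const,
      Matrix.empty_val', Matrix.cons_val_fin_one, Matrix.of_apply, Fin.isValue]
    ring
  have hdo2 : xo ⬝ᵥ vo t = xo 0 * vo t 0 + xo 1 * vo t 1 := by
    simp only [dotProduct, Fin.sum_univ_two]
  have hdo3 : xo ⬝ᵥ xo = xo 0 * xo 0 + xo 1 * xo 1 := by
    simp only [dotProduct, Fin.sum_univ_two]
  have hee : e t 0 * e t 0 + e t 1 * e t 1 ≠ 0 := by
    have : e t 0 * e t 0 + e t 1 * e t 1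
        = ahat t ^ 2 * (x t 0 * x t 0 + x t 1 * x t 1) := by
      rw [hE0, hE1]
      linear_combination (ahat t ^ 2 * (x t 0 * x t 0 + x t 1 * x t 1)) * hcs
    rw [this]
    exact mul_ne_zero (pow_ne_zero 2 ha0) hxx
  have hT : (Rot (θhat t))ᵀ
      = !![Real.cos (θhat t), Real.sin (θhat t); -Real.sin (θhat t), Real.cos (θhat t)] := by
    funext i j
    fin_cases i <;> fin_cases j <;> simp [Rot, Matrix.transpose_apply]
  -- numerator / denominator conversions for the observer derivative values
  have D1 : (((ahat t)⁻¹ • ((Rot (θhat t))ᵀ *ᵥ xo)) ⬝ᵥ ((ahat t)⁻¹ • ((Rot (θhat t))ᵀ *ᵥ xo)))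
      = ((ahat t)⁻¹ * (ahat t)⁻¹) * (xo ⬝ᵥ xo) := by
    rw [hT]
    simp [Matrix.mulVec, dotProduct, Fin.sum_univ_two]
    linear_combination ((ahat t)⁻¹ * (ahat t)⁻¹ * (xo 0 * xo 0 + xo 1 * xo 1)) * hcs
  have N1 : (((ahat t)⁻¹ • ((Rot (θhat t))ᵀ *ᵥ xo)) ⬝ᵥ (Smat *ᵥ v t))
      = ((ahat t)⁻¹ * (ahat t)⁻¹) * (xo ⬝ᵥ (Smat *ᵥ vo t)) := by
    rw [hT, hdo1, hV0, hV1]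
    simp [Smat, Matrix.mulVec, dotProduct, Fin.sum_univ_two]
    field_simp
    ring
  have N2 : (((ahat t)⁻¹ • ((Rot (θhat t))ᵀ *ᵥ xo)) ⬝ᵥ v t)
      = ((ahat t)⁻¹ * (ahat t)⁻¹) * (xo ⬝ᵥ vo t) := by
    rw [hT, hdo2, hV0, hV1]
    simp [Matrix.mulVec, dotProduct, Fin.sum_univ_two]
    field_simp
    ring
  have hθA : HasDerivAt θhat (xo ⬝ᵥ (Smat *ᵥ vo t) / (xo ⬝ᵥ xo)) t := by
    have h := hθdot t
    rwa [N1, D1, mul_div_mul_left _ _ ha0'] at h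
  have haB : HasDerivAt ahat (-(ahat t * (xo ⬝ᵥ vo t / (xo ⬝ᵥ xo)))) t := by
    have h := hadot t
    rw [N2, D1, mul_div_mul_left _ _ ha0'] at h
    convert h using 1
    ring
  -- componentwise derivatives
  have hx0 : HasDerivAt (fun τ => x τ 0) (v t 0) t := hasDerivAt_pi.1 (hxdot t) 0
  have hx1 : HasDerivAt (fun τ => x τ 1) (v t 1) t := hasDerivAt_pi.1 (hxdot t) 1
  have hcos : HasDerivAt (fun τ => Real.cos (θhat τ))
      (-Real.sin (θhat t) * (xo ⬝ᵥ (Smat *ᵥ vo t) / (xo ⬝ᵥ xo))) t :=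
    (Real.hasDerivAt_cos (θhat t)).comp t hθA
  have hsin : HasDerivAt (fun τ => Real.sin (θhat τ))
      (Real.cos (θhat t) * (xo ⬝ᵥ (Smat *ᵥ vo t) / (xo ⬝ᵥ xo))) t :=
    (Real.hasDerivAt_sin (θhat t)).comp t hθA
  -- the derivative of e in clean form
  have key : HasDerivAt e
      (vo t + (xo ⬝ᵥ (Smat *ᵥ vo t) / (xo ⬝ᵥ xo)) • (Smat *ᵥ e t)
        - (xo ⬝ᵥ vo t / (xo ⬝ᵥ xo)) • e t) t := by
    apply hasDerivAt_pi.2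
    intro i
    fin_cases i
    · have h0 : HasDerivAt
          (fun τ => ahat τ * (Real.cos (θhat τ) * x τ 0 - Real.sin (θhat τ) * x τ 1))
          (-(ahat t * (xo ⬝ᵥ vo t / (xo ⬝ᵥ xo)))
              * (Real.cos (θhat t) * x t 0 - Real.sin (θhat t) * x t 1)
            + ahat t * ((-Real.sin (θhat t) * (xo ⬝ᵥ (Smat *ᵥ vo t) / (xo ⬝ᵥ xo)) * x t 0
                  + Real.cos (θhat t) * v t 0)
                - (Real.cos (θhat t) * (xo ⬝ᵥ (Smat *ᵥ vo t) / (xo ⬝ᵥ xo)) * x t 1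
                  + Real.sin (θhat t) * v t 1))) t :=
        haB.mul ((hcos.mul hx0).sub (hsin.mul hx1))
      have h0' : HasDerivAt (fun τ => e τ 0)
          (-(ahat t * (xo ⬝ᵥ vo t / (xo ⬝ᵥ xo)))
              * (Real.cos (θhat t) * x t 0 - Real.sin (θhat t) * x t 1)
            + ahat t * ((-Real.sin (θhat t) * (xo ⬝ᵥ (Smat *ᵥ vo t) / (xo ⬝ᵥ xo)) * x t 0
                  + Real.cos (θhat t) * v t 0)
                - (Real.cos (θhat t) * (xo ⬝ᵥ (Smat *ᵥ vo t) / (xo ⬝ᵥ xo)) * x t 1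
                  + Real.sin (θhat t) * v t 1))) t := by
        apply h0.congr_of_eventuallyEq
        filter_upwards with τ
        rw [he τ]
        simp only [Pi.smul_apply, smul_eq_mul, Matrix.mulVec, dotProduct,
          Fin.sum_univ_two, Rot, Matrix.cons_val', Matrix.cons_val_zero, Matrix.cons_val_one,
          Matrix.head_cons, Matrix.head_fin_const, Matrix.empty_val', Matrix.cons_val_fin_one,
          Matrix.of_apply, Fin.isValue]
        ring
      refine h0'.congr_deriv ?_
      simp only [Pi.add_apply, Pi.sub_apply, Pi.smul_apply, smul_eq_mul, Fin.zero_eta,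
        Fin.isValue]
      rw [hS0, hV0, hE0, hE1]
      ring
    · have h1 : HasDerivAt
          (fun τ => ahat τ * (Real.sin (θhat τ) * x τ 0 + Real.cos (θhat τ) * x τ 1))
          (-(ahat t * (xo ⬝ᵥ vo t / (xo ⬝ᵥ xo)))
              * (Real.sin (θhat t) * x t 0 + Real.cos (θhat t) * x t 1)
            + ahat t * ((Real.cos (θhat t) * (xo ⬝ᵥ (Smat *ᵥ vo t) / (xo ⬝ᵥ xo)) * x t 0
                  + Real.sin (θhat t) * v t 0)
                + (-Real.sin (θhat t) * (xo ⬝ᵥ (Smat *ᵥ vo t) / (xo ⬝ᵥ xo)) * x t 1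
                  + Real.cos (θhat t) * v t 1))) t :=
        haB.mul ((hsin.mul hx0).add (hcos.mul hx1))
      have h1' : HasDerivAt (fun τ => e τ 1)
          (-(ahat t * (xo ⬝ᵥ vo t / (xo ⬝ᵥ xo)))
              * (Real.sin (θhat t) * x t 0 + Real.cos (θhat t) * x t 1)
            + ahat t * ((Real.cos (θhat t) * (xo ⬝ᵥ (Smat *ᵥ vo t) / (xo ⬝ᵥ xo)) * x t 0
                  + Real.sin (θhat t) * v t 0)
                + (-Real.sin (θhat t) * (xo ⬝ᵥ (Smat *ᵥ vo t) / (xo ⬝ᵥ xo)) * x t 1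
                  + Real.cos (θhat t) * v t 1))) t := by
        apply h1.congr_of_eventuallyEq
        filter_upwards with τ
        rw [he τ]
        simp only [Pi.smul_apply, smul_eq_mul, Matrix.mulVec, dotProduct,
          Fin.sum_univ_two, Rot, Matrix.cons_val', Matrix.cons_val_zero, Matrix.cons_val_one,
          Matrix.head_cons, Matrix.head_fin_const, Matrix.empty_val', Matrix.cons_val_fin_one,
          Matrix.of_apply, Fin.isValue]
      refine h1'.congr_deriv ?_
      simp only [Pi.add_apply, Pi.sub_apply, Pi.smul_apply, smul_eq_mul, Fin.mk_one,
        Fin.isValue]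
      rw [hS1, hV1, hE0, hE1]
      ring
  -- rewrite the target into the clean form using the orthogonal decomposition
  have target_eq :
      (e t ⬝ᵥ (Smat *ᵥ vo t) / (e t ⬝ᵥ e t) - xo ⬝ᵥ (Smat *ᵥ vo t) / (xo ⬝ᵥ xo))
          • (Smatᵀ *ᵥ e t)
        + (e t ⬝ᵥ vo t / (e t ⬝ᵥ e t) - xo ⬝ᵥ vo t / (xo ⬝ᵥ xo)) • e t
      = vo t + (xo ⬝ᵥ (Smat *ᵥ vo t) / (xo ⬝ᵥ xo)) • (Smat *ᵥ e t)
        - (xo ⬝ᵥ vo t / (xo ⬝ᵥ xo)) • e t := by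
    funext i
    fin_cases i
    · simp only [Pi.add_apply, Pi.sub_apply, Pi.smul_apply, smul_eq_mul, Fin.zero_eta,
        Fin.isValue]
      rw [hST0, hS0, hd1, hd2, hd3, hdo1, hdo2, hdo3]
      have hee2 : e t 0 ^ 2 + e t 1 ^ 2 ≠ 0 := by rw [sq, sq]; exact hee
      have hoo2 : xo 0 ^ 2 + xo 1 ^ 2 ≠ 0 := by rw [sq, sq]; exact hoo
      field_simp
      ring
    · simp only [Pi.add_apply, Pi.sub_apply, Pi.smul_apply, smul_eq_mul, Fin.mk_one,
        Fin.isValue]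
      rw [hST1, hS1, hd1, hd2, hd3, hdo1, hdo2, hdo3]
      have hee2 : e t 0 ^ 2 + e t 1 ^ 2 ≠ 0 := by rw [sq, sq]; exact hee
      have hoo2 : xo 0 ^ 2 + xo 1 ^ 2 ≠ 0 := by rw [sq, sq]; exact hoo
      field_simp
      ring
  rw [target_eq]
  exact key
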